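/- Let ℓ and n be natural numbers with 2 < ℓ ≤ n and ℓ dividing n, let w₁, …, wₙ be nonnegative reals with average a = (1/n)·∑_{i=1}^n wᵢ, and consider n papers where paper i has ℓ weight entries: one entry of value wᵢ and ℓ − 1 entries of value 0. If the multiset {w₁, …, wₙ} can be partitioned into n/ℓ sub-multisets each of cardinality ℓ and each of sum ℓ·a, then there exists a valid assignment of the weight entries to the n reviewers whose sorted mean-weight vector equals the vector v ∈ ℝⁿ whose first n − n/ℓ coordinates are 0 and whose last n/ℓ coordinates are a. -/

import Mathlib

open Finset

lemma exists_le_map' {α β : Type*} [DecidableEq α] [DecidableEq β] (f : α → β) :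
    ∀ (p : Multiset β) (s : Multiset α), p ≤ s.map f → ∃ u ≤ s, u.map f = p := by
  intro p
  induction p using Multiset.induction with
  | empty => intro s _; exact ⟨0, Multiset.zero_le s, rfl⟩
  | cons b p ih =>
    intro s hle
    have hb : b ∈ s.map f := Multiset.mem_of_le hle (Multiset.mem_cons_self b p)
    obtain ⟨x, hx, hfx⟩ := Multiset.mem_map.mp hb
    have h1 : p ≤ (s.map f).erase b := by
      have := Multiset.erase_le_erase b hle
      rwa [Multiset.erase_cons_head] at this
    have h2 : (s.map f).erase b = (s.erase x).map f := by
      conv_lhs => rw [← Multiset.cons_erase hx]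
      rw [Multiset.map_cons, hfx, Multiset.erase_cons_head]
    rw [h2] at h1
    obtain ⟨u, hu, hmu⟩ := ih (s.erase x) h1
    refine ⟨x ::ₘ u, ?_, by rw [Multiset.map_cons, hfx, hmu]⟩
    calc x ::ₘ u ≤ x ::ₘ s.erase x := Multiset.cons_le_cons x hu
    _ = s := Multiset.cons_erase hx

lemma exists_sum_map' {α β : Type*} [DecidableEq α] [DecidableEq β] (f : α → β) :
    ∀ (k : ℕ) (P : Fin k → Multiset β) (s : Multiset α),
      (∑ t, P t) = s.map f →
      ∃ u : Fin k → Multiset α, (∑ t, u t) = s ∧ ∀ t, (u t).map f = P t := by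
  intro k
  induction k with
  | zero =>
    intro P s h
    have hs : s = 0 := by
      have : s.map f = 0 := by simpa using h.symm
      simpa using congrArg Multiset.card this
    exact ⟨fun _ => 0, by simp [hs], fun t => t.elim0⟩
  | succ k ih =>
    intro P s h
    rw [Fin.sum_univ_castSucc] at h
    have hle : P (Fin.last k) ≤ s.map f := h ▸ Multiset.le_add_left _ _
    obtain ⟨u₀, hu₀, hmu₀⟩ := exists_le_map' f _ s hle
    obtain ⟨v, hv⟩ := Multiset.le_iff_exists_add.mp hu₀
    have hv' : (∑ t : Fin k, P (t.castSucc)) = v.map f := by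
      rw [hv, Multiset.map_add, hmu₀] at h
      rw [add_comm (P (Fin.last k))] at h
      exact add_right_cancel h
    obtain ⟨u, hsum, hmap⟩ := ih _ v hv'
    refine ⟨Fin.snoc u u₀, ?_, ?_⟩
    · rw [Fin.sum_univ_castSucc]
      simp only [Fin.snoc_castSucc, Fin.snoc_last]
      rw [hsum, hv]
      exact (add_comm _ _)
    · intro t
      induction t using Fin.lastCases with
      | last => simpa using hmu₀
      | cast i => simpa using hmap i
open Finset

lemma map_univ_two_vals {n : ℕ} (g : Fin n → ℝ) (p : Fin n → Prop) [DecidablePred p] (c : ℝ)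
    (h1 : ∀ j, p j → g j = c) (h0 : ∀ j, ¬ p j → g j = 0) :
    Multiset.map g (univ : Finset (Fin n)).val
      = Multiset.replicate (univ.filter p).card c
        + Multiset.replicate (n - (univ.filter p).card) 0 := by
  have hsplit := Multiset.filter_add_not p (univ : Finset (Fin n)).val
  have hcard : (Multiset.filter p (univ : Finset (Fin n)).val).card
      + (Multiset.filter (fun a => ¬ p a) (univ : Finset (Fin n)).val).card = n := by
    rw [← Multiset.card_add, hsplit]; simp
  have hc1 : (univ.filter p).card = (Multiset.filter p (univ : Finset (Fin n)).val).card := rfl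
  conv_lhs => rw [← hsplit]
  rw [Multiset.map_add]
  congr 1
  · rw [Multiset.eq_replicate]
    refine ⟨by simp [hc1], ?_⟩
    intro b hb
    obtain ⟨j, hj, rfl⟩ := Multiset.mem_map.mp hb
    exact h1 j (Multiset.of_mem_filter hj)
  · rw [Multiset.eq_replicate]
    refine ⟨by simp; omega, ?_⟩
    intro b hb
    obtain ⟨j, hj, rfl⟩ := Multiset.mem_map.mp hb
    exact h0 j (Multiset.mem_filter.mp hj).2


/-- An assignment of the weight entries `(i, s)` (paper `i`, entry `s`) to reviewers is valid
if each reviewer gets exactly `ℓ` entries and no reviewer gets two entries from the same paper. -/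
def ValidAssign (m k n ℓ : ℕ) (f : Fin m × Fin k → Fin n) : Prop :=
  (∀ j : Fin n, (Finset.univ.filter (fun e : Fin m × Fin k => f e = j)).card = ℓ) ∧
  ∀ (i : Fin m) (s s' : Fin k), f (i, s) = f (i, s') → s = s'

/-- The mean weight of reviewer `j`: `(1/ℓ)` times the sum of the values of the entries
assigned to `j`. -/
noncomputable def meanWeight (m k n ℓ : ℕ) (x : Fin m × Fin k → ℝ)
    (f : Fin m × Fin k → Fin n) (j : Fin n) : ℝ :=
  (1 / (ℓ : ℝ)) * ∑ e ∈ Finset.univ.filter (fun e : Fin m × Fin k => f e = j), x e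

/-- Forward direction of the NP-hardness reduction: if the multiset `{w₁, …, wₙ}` can be
partitioned into `n/ℓ` sub-multisets each of cardinality `ℓ` and sum `ℓ·a` (where `a` is the
average of the `wᵢ`), then in the setting where paper `i` has one entry of value `w i` and
`ℓ - 1` zero entries, there is a valid assignment whose sorted mean-weight vector is
`v = (0, …, 0, a, …, a)` (with `n/ℓ` trailing `a`'s); equivalently, the multiset of reviewer
mean weights equals the multiset of coordinates of `v`. -/
theorem partition_gives_assignment_with_sorted_mean_vector_v
    (ℓ n : ℕ) (hℓ : 2 < ℓ) (hℓn : ℓ ≤ n) (hdvd : ℓ ∣ n)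
    (w : Fin n → ℝ) (hw : ∀ i, 0 ≤ w i)
    (a : ℝ) (ha : a = (1 / (n : ℝ)) * ∑ i, w i)
    (P : Fin (n / ℓ) → Multiset ℝ)
    (hPcard : ∀ t, (P t).card = ℓ)
    (hPsum : ∀ t, (P t).sum = (ℓ : ℝ) * a)
    (hPpart : ∑ t : Fin (n / ℓ), P t = Multiset.map w (Finset.univ : Finset (Fin n)).val) :
    ∃ f : Fin n × Fin ℓ → Fin n,
      ValidAssign n ℓ n ℓ f ∧
      Multiset.map
          (meanWeight n ℓ n ℓ (fun e => if (e.2 : ℕ) = 0 then w e.1 else 0) f)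
          (Finset.univ : Finset (Fin n)).val
        = Multiset.map (fun i : Fin n => if (i : ℕ) < n - n / ℓ then (0 : ℝ) else a)
            (Finset.univ : Finset (Fin n)).val := by
  classical
  haveI : NeZero ℓ := ⟨by omega⟩
  have hℓ0 : (0:ℕ) < ℓ := by omega
  have hqℓ : (n / ℓ) * ℓ = n := Nat.div_mul_cancel hdvd
  have hq1 : 1 ≤ (n / ℓ) := (Nat.one_le_div_iff hℓ0).mpr hℓn
  have hqn : (n / ℓ) ≤ n := Nat.div_le_self n ℓ
  -- lift the partition of values to a partition of indices
  obtain ⟨u, husum, humap⟩ := exists_sum_map' w (n / ℓ) P (Finset.univ : Finset (Fin n)).val hPpart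
  have hule : ∀ t, u t ≤ (Finset.univ : Finset (Fin n)).val := fun t =>
    husum ▸ Finset.single_le_sum (fun i _ => Multiset.zero_le _) (Finset.mem_univ t)
  have hnd : ∀ t, (u t).Nodup := fun t =>
    Multiset.nodup_of_le (hule t) Finset.univ.nodup
  set B : Fin (n / ℓ) → Finset (Fin n) := fun t => ⟨u t, hnd t⟩ with hBdef
  have hBmem : ∀ {i t}, i ∈ B t ↔ i ∈ u t := fun {i t} => Iff.rfl
  have hBcard : ∀ t, (B t).card = ℓ := by
    intro t
    have : (Multiset.map w (u t)).card = ℓ := by rw [humap t, hPcard t]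
    rw [Multiset.card_map] at this
    exact this
  have hBsum : ∀ t, ∑ i ∈ B t, w i = (ℓ : ℝ) * a := by
    intro t
    have : (Multiset.map w (u t)).sum = (ℓ : ℝ) * a := by rw [humap t, hPsum t]
    exact this
  -- each index lies in exactly one block
  have hexu : ∀ i : Fin n, ∃! t, i ∈ u t := by
    intro i
    have hmem : i ∈ (Finset.univ : Finset (Fin n)).val := Finset.mem_univ i
    rw [← husum] at hmem
    obtain ⟨t, _, ht⟩ := Multiset.mem_sum.mp hmem
    refine ⟨t, ht, ?_⟩
    intro t' ht'
    by_contra hne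
    have hcount : Multiset.count i (Finset.univ : Finset (Fin n)).val = 1 :=
      Multiset.count_eq_one_of_mem Finset.univ.nodup (Finset.mem_univ i)
    have h2 : (2:ℕ) ≤ Multiset.count i (∑ t'' : Fin (n / ℓ), u t'') := by
      rw [Multiset.count_sum']
      have ha1 : 1 ≤ Multiset.count i (u t) := Multiset.one_le_count_iff_mem.mpr ht
      have ha2 : 1 ≤ Multiset.count i (u t') := Multiset.one_le_count_iff_mem.mpr ht'
      calc (2:ℕ) ≤ Multiset.count i (u t') + Multiset.count i (u t) := by omega
        _ = ∑ x ∈ ({t', t} : Finset (Fin (n / ℓ))), Multiset.count i (u x) := by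
            rw [Finset.sum_pair hne]
        _ ≤ ∑ x : Fin (n / ℓ), Multiset.count i (u x) :=
            Finset.sum_le_sum_of_subset (Finset.subset_univ _)
    rw [husum, hcount] at h2
    omega
  set block : Fin n → Fin (n / ℓ) := fun i => (hexu i).choose with hblockdef
  have hmemb : ∀ i, i ∈ u (block i) := fun i => (hexu i).choose_spec.1
  have huniq : ∀ {i t}, i ∈ u t → block i = t := fun {i t} h =>
    ((hexu i).choose_spec.2 t h).symm
  -- the assignment
  set τ : Fin (n / ℓ) × Fin ℓ ≃ Fin n := finProdFinEquiv.trans (finCongr hqℓ) with hτdef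
  set f : Fin n × Fin ℓ → Fin n := fun e => τ (block e.1, e.2) with hfdef
  have hfib : ∀ j, Finset.univ.filter (fun e : Fin n × Fin ℓ => f e = j)
      = (B (τ.symm j).1) ×ˢ ({(τ.symm j).2} : Finset (Fin ℓ)) := by
    intro j
    ext ⟨i, s⟩
    simp only [Finset.mem_filter, Finset.mem_product, Finset.mem_singleton,
      Finset.mem_univ, true_and, hfdef]
    rw [Equiv.apply_eq_iff_eq_symm_apply, Prod.ext_iff]
    constructor
    · rintro ⟨h1, h2⟩
      exact ⟨hBmem.mpr (h1 ▸ hmemb i), h2⟩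
    · rintro ⟨h1, h2⟩
      exact ⟨huniq (hBmem.mp h1), h2⟩
  have hmean : ∀ j, meanWeight n ℓ n ℓ (fun e => if (e.2 : ℕ) = 0 then w e.1 else 0) f j
      = if ((τ.symm j).2 : ℕ) = 0 then a else 0 := by
    intro j
    rw [meanWeight, hfib j, Finset.sum_product]
    simp only [Finset.sum_singleton]
    by_cases h0 : ((τ.symm j).2 : ℕ) = 0
    · rw [if_pos h0]
      simp only [h0, if_true]
      rw [hBsum]
      have : (ℓ:ℝ) ≠ 0 := Nat.cast_ne_zero.mpr (by omega)
      field_simp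
    · rw [if_neg h0]
      simp [h0]
  refine ⟨f, ⟨?_, ?_⟩, ?_⟩
  · intro j
    rw [hfib j, Finset.card_product, Finset.card_singleton, hBcard, mul_one]
  · intro i s s' h
    have := τ.injective h
    exact (Prod.ext_iff.mp this).2
  · rw [Multiset.map_congr rfl (fun j _ => hmean j)]
    have hL := map_univ_two_vals (fun j => if ((τ.symm j).2 : ℕ) = 0 then a else 0)
      (fun j => ((τ.symm j).2 : ℕ) = 0) a (fun j h => if_pos h) (fun j h => if_neg h)
    have hR := map_univ_two_vals (fun i : Fin n => if (i : ℕ) < n - (n / ℓ) then (0:ℝ) else a)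
      (fun i : Fin n => ¬ ((i : ℕ) < n - (n / ℓ))) a (fun j h => if_neg h)
      (fun j h => if_pos (not_not.mp h))
    have hcardL : (Finset.univ.filter (fun j : Fin n => ((τ.symm j).2 : ℕ) = 0)).card = (n / ℓ) := by
      have himg : Finset.univ.filter (fun j : Fin n => ((τ.symm j).2 : ℕ) = 0)
          = Finset.image (fun t : Fin (n / ℓ) => τ (t, (0 : Fin ℓ))) Finset.univ := by
        ext j
        simp only [Finset.mem_filter, Finset.mem_univ, true_and, Finset.mem_image]
        constructor
        · intro h
          refine ⟨(τ.symm j).1, ?_⟩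
          have h2 : (τ.symm j).2 = 0 := Fin.ext (by simpa using h)
          calc τ ((τ.symm j).1, 0) = τ ((τ.symm j).1, (τ.symm j).2) := by rw [h2]
            _ = τ (τ.symm j) := by rw [Prod.mk.eta]
            _ = j := τ.apply_symm_apply j
        · rintro ⟨t, rfl⟩
          simp
      rw [himg, Finset.card_image_of_injective _
        (fun t t' h => congrArg Prod.fst (τ.injective h)), Finset.card_univ, Fintype.card_fin]
    have hcardR : (Finset.univ.filter (fun i : Fin n => ¬ ((i : ℕ) < n - (n / ℓ)))).card = (n / ℓ) := by
      have hsplit := Finset.card_filter_add_card_filter_not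
        (s := (Finset.univ : Finset (Fin n))) (p := fun i : Fin n => (i : ℕ) < n - (n / ℓ))
      have hnq : n - (n / ℓ) < n := by omega
      have hIio : Finset.univ.filter (fun i : Fin n => (i : ℕ) < n - (n / ℓ))
          = Finset.Iio (⟨n - (n / ℓ), hnq⟩ : Fin n) := by
        ext i
        simp [Finset.mem_Iio, Fin.lt_def]
      rw [hIio] at hsplit
      rw [Fin.card_Iio] at hsplit
      simp only [Finset.card_univ, Fintype.card_fin] at hsplit
      omega
    rw [hL, hR, hcardL, hcardR]
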